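/- Let Y be a nonnegative random variable whose tail satisfies P(Y ≥ t) ≤ a·exp(−t^α) for all t > 0, where a > 0 and α > 1. Then for any w ≥ 1, E[Y·1{Y ≥ w}] ≤ 2a·w·exp(−w^α). -/

import Mathlib

open MeasureTheory Real

-- key pointwise inequality
lemma pow_add_aux {w t α : ℝ} (hw : 1 ≤ w) (ht : 0 ≤ t) (hα : 1 ≤ α) :
    w ^ α + t ≤ (w + t) ^ α := by
  have hw0 : 0 < w := lt_of_lt_of_le one_pos hw
  have h1 : (1 : ℝ) + α * (t / w) ≤ (1 + t / w) ^ α :=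
    one_add_mul_self_le_rpow_one_add (by nlinarith [div_nonneg ht hw0.le]) hα
  have h2 : (w + t) ^ α = w ^ α * (1 + t / w) ^ α := by
    rw [← Real.mul_rpow (le_of_lt hw0) (by positivity)]
    congr 1
    field_simp
  rw [h2]
  have h3 : w ^ α * (1 + α * (t / w)) ≤ w ^ α * (1 + t / w) ^ α :=
    mul_le_mul_of_nonneg_left h1 (Real.rpow_nonneg (le_of_lt hw0) α)
  refine le_trans ?_ h3
  have hwge : w ≤ w ^ α := by
    simpa using Real.rpow_le_rpow_of_exponent_le hw hα
  have h4 : t ≤ w ^ α * (α * (t / w)) := by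
    have c1 : w * (t / w) ≤ w ^ α * (t / w) :=
      mul_le_mul_of_nonneg_right hwge (div_nonneg ht hw0.le)
    have c2 : w ^ α * (t / w) ≤ w ^ α * (α * (t / w)) := by
      apply mul_le_mul_of_nonneg_left _ (Real.rpow_nonneg hw0.le α)
      nlinarith [div_nonneg ht hw0.le]
    have hcancel : w * (t / w) = t := by field_simp
    linarith
  rw [mul_add, mul_one]
  linarith

theorem stmt1 {Ω : Type*} [MeasurableSpace Ω] (μ : Measure Ω) [IsProbabilityMeasure μ]
    (Y : Ω → ℝ) (hY : Measurable Y) (hYnn : ∀ ω, 0 ≤ Y ω) (hInt : Integrable Y μ)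
    (a α : ℝ) (ha : 0 < a) (hα : 1 < α)
    (htail : ∀ t : ℝ, 0 < t → μ {ω | t ≤ Y ω} ≤ ENNReal.ofReal (a * Real.exp (-(t ^ α))))
    (w : ℝ) (hw : 1 ≤ w) :
    ∫ ω in {ω | w ≤ Y ω}, Y ω ∂μ ≤ 2 * a * w * Real.exp (-(w ^ α)) := by
  have hw0 : 0 < w := lt_of_lt_of_le one_pos hw
  set S : Set Ω := {ω | w ≤ Y ω} with hS
  have hSm : MeasurableSet S := measurableSet_le measurable_const hY
  set g : Ω → ℝ := fun ω => max (Y ω - w) 0 with hg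
  have hg_int : Integrable g μ := (hInt.sub (integrable_const w)).pos_part
  have hg_nn : 0 ≤ᵐ[μ] g := Filter.Eventually.of_forall fun ω => le_max_right _ _
  -- tail bound at w
  have hμS : (μ S).toReal ≤ a * Real.exp (-(w ^ α)) := by
    have := htail w hw0
    calc (μ S).toReal ≤ (ENNReal.ofReal (a * Real.exp (-(w ^ α)))).toReal :=
          ENNReal.toReal_mono ENNReal.ofReal_ne_top this
      _ = a * Real.exp (-(w ^ α)) := ENNReal.toReal_ofReal (by positivity)
  -- step 1: split
  have step1 : ∫ ω in S, Y ω ∂μ = w * (μ S).toReal + ∫ ω in S, g ω ∂μ := by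
    have : ∫ ω in S, Y ω ∂μ = ∫ ω in S, (w + g ω) ∂μ := by
      apply setIntegral_congr_fun hSm
      intro ω hω
      have : w ≤ Y ω := hω
      simp [hg, max_eq_left (by linarith : (0:ℝ) ≤ Y ω - w)]
    rw [this, integral_add (integrableOn_const (C := w) (s := S) (μ := μ) (measure_ne_top _ _))
      hg_int.integrableOn, setIntegral_const]
    simp [smul_eq_mul, Measure.real]
    ring
  have step2 : ∫ ω in S, g ω ∂μ ≤ ∫ ω, g ω ∂μ :=
    setIntegral_le_integral hg_int hg_nn
  -- layer cake on g
  have step3 : ∫ ω, g ω ∂μ ≤ a * Real.exp (-(w ^ α)) := by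
    rw [hg_int.integral_eq_integral_meas_lt hg_nn]
    have hbd : ∀ t ∈ Set.Ioi (0:ℝ),
        (μ {ω | t < g ω}).toReal ≤ a * Real.exp (-(w ^ α)) * Real.exp (-t) := by
      intro t ht
      have ht0 : 0 < t := ht
      have hsub : {ω | t < g ω} ⊆ {ω | w + t ≤ Y ω} := by
        intro ω hω
        simp only [Set.mem_setOf_eq, hg] at hω ⊢
        rcases lt_max_iff.mp hω with h | h
        · linarith
        · linarith
      have h1 : μ {ω | t < g ω} ≤ ENNReal.ofReal (a * Real.exp (-((w + t) ^ α))) :=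
        le_trans (measure_mono hsub) (htail (w + t) (by linarith))
      have h2 : a * Real.exp (-((w + t) ^ α)) ≤ a * Real.exp (-(w ^ α)) * Real.exp (-t) := by
        rw [mul_assoc, ← Real.exp_add]
        apply mul_le_mul_of_nonneg_left _ (le_of_lt ha)
        apply Real.exp_le_exp.mpr
        have := pow_add_aux hw (le_of_lt ht0) (le_of_lt hα)
        linarith
      calc (μ {ω | t < g ω}).toReal
          ≤ (ENNReal.ofReal (a * Real.exp (-((w + t) ^ α)))).toReal :=
            ENNReal.toReal_mono ENNReal.ofReal_ne_top h1
        _ = a * Real.exp (-((w + t) ^ α)) := ENNReal.toReal_ofReal (by positivity)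
        _ ≤ _ := h2
    have hInt2 : IntegrableOn (fun t => a * Real.exp (-(w ^ α)) * Real.exp (-t))
        (Set.Ioi (0:ℝ)) := ((exp_neg_integrableOn_Ioi 0 one_pos).const_mul
          (a * Real.exp (-(w ^ α)))).congr (Filter.Eventually.of_forall fun t => by ring_nf)
    calc ∫ t in Set.Ioi (0:ℝ), (μ {ω | t < g ω}).toReal
        ≤ ∫ t in Set.Ioi (0:ℝ), a * Real.exp (-(w ^ α)) * Real.exp (-t) := by
          apply integral_mono_of_nonneg
            (Filter.Eventually.of_forall fun t => ENNReal.toReal_nonneg) hInt2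
          exact (ae_restrict_iff' measurableSet_Ioi).mpr (Filter.Eventually.of_forall hbd)
      _ = a * Real.exp (-(w ^ α)) * ∫ t in Set.Ioi (0:ℝ), Real.exp (-t) := by
          rw [integral_const_mul]
      _ = a * Real.exp (-(w ^ α)) := by rw [integral_exp_neg_Ioi_zero, mul_one]
  have final : w * (a * Real.exp (-(w ^ α))) + a * Real.exp (-(w ^ α))
      ≤ 2 * a * w * Real.exp (-(w ^ α)) := by
    have h := Real.exp_pos (-(w ^ α))
    nlinarith [mul_nonneg (mul_nonneg ha.le h.le) (sub_nonneg.mpr hw)]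
  calc ∫ ω in S, Y ω ∂μ = w * (μ S).toReal + ∫ ω in S, g ω ∂μ := step1
    _ ≤ w * (a * Real.exp (-(w ^ α))) + a * Real.exp (-(w ^ α)) := by
        have := mul_le_mul_of_nonneg_left hμS (le_of_lt hw0)
        linarith [le_trans step2 step3]
    _ ≤ _ := final
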